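/- Let H be a complex Hilbert space, let K : H → H be a bounded self-adjoint operator with operator norm κ := ‖K‖, and let b ∈ H. Define F(λ) := λ − 1 − ⟨(λI − K)^{−1} b, b⟩ for real λ > κ. Then for every λ > κ, F(λ) is a real number, F is differentiable at λ with F′(λ) = 1 + ⟨(λI − K)^{−2} b, b⟩, this derivative satisfies F′(λ) ≥ 1, and F is strictly increasing on (κ, ∞). -/

import Mathlib

/-- Monotonicity of the Schur function `F(λ) = λ − 1 − ⟨(λI−K)⁻¹b, b⟩` on `(‖K‖, ∞)`:
the Schur term is real, `F` is differentiable with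
`F'(λ) = 1 + ⟨(λI−K)⁻²b, b⟩ ≥ 1`, and `F` is strictly increasing on `(‖K‖, ∞)`. -/
theorem stmt15 {H : Type*} [NormedAddCommGroup H] [InnerProductSpace ℂ H]
    [CompleteSpace H] (K : H →L[ℂ] H) (hK : IsSelfAdjoint K) (b : H) :
    (∀ lam : ℝ, ‖K‖ < lam →
      (inner ℂ b ((Ring.inverse ((lam : ℂ) • (1 : H →L[ℂ] H) - K)) b) : ℂ).im = 0 ∧
      HasDerivAt (fun t : ℝ => t - 1 -
          (inner ℂ b ((Ring.inverse ((t : ℂ) • (1 : H →L[ℂ] H) - K)) b) : ℂ).re)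
        (1 + (inner ℂ b (((Ring.inverse ((lam : ℂ) • (1 : H →L[ℂ] H) - K)) ^ 2) b) : ℂ).re)
        lam ∧
      1 ≤ 1 + (inner ℂ b (((Ring.inverse ((lam : ℂ) • (1 : H →L[ℂ] H) - K)) ^ 2) b) : ℂ).re) ∧
    StrictMonoOn (fun t : ℝ => t - 1 -
        (inner ℂ b ((Ring.inverse ((t : ℂ) • (1 : H →L[ℂ] H) - K)) b) : ℂ).re)
      (Set.Ioi ‖K‖) := by
  -- A t is a unit for t > ‖K‖
  set A : ℝ → (H →L[ℂ] H) := fun t => (t : ℂ) • (1 : H →L[ℂ] H) - K with hA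
  have hunit : ∀ t : ℝ, ‖K‖ < t → IsUnit (A t) := by
    intro t ht
    have h1 : (t : ℂ) ∉ spectrum ℂ K := by
      intro hmem
      have h2 := spectrum.subset_closedBall_norm_mul K hmem
      rw [Metric.mem_closedBall, dist_zero_right] at h2
      have h3 : ‖(1 : H →L[ℂ] H)‖ ≤ 1 := ContinuousLinearMap.norm_id_le
      have h4 : ‖K‖ * ‖(1 : H →L[ℂ] H)‖ ≤ ‖K‖ * 1 :=
        mul_le_mul_of_nonneg_left h3 (norm_nonneg K)
      have h0 : (0:ℝ) ≤ t := le_of_lt ((norm_nonneg K).trans_lt ht)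
      have h5 : ‖(t : ℂ)‖ = t := by
        simp [Complex.norm_real, abs_of_nonneg h0]
      rw [h5] at h2
      nlinarith
    rw [spectrum.notMem_iff] at h1
    rwa [Algebra.algebraMap_eq_smul_one] at h1
  -- self-adjointness of inverse
  have hsaA : ∀ t : ℝ, IsSelfAdjoint (A t) := by
    intro t
    rw [IsSelfAdjoint, star_sub, star_smul, star_one, hK.star_eq, Complex.star_def,
      Complex.conj_ofReal]
  have hsaInv : ∀ t : ℝ, IsSelfAdjoint (Ring.inverse (A t)) := by
    intro t
    rw [IsSelfAdjoint, ← Ring.inverse_star, (hsaA t).star_eq]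
  -- realness of inner products with selfadjoint operators
  have hreal : ∀ (S : H →L[ℂ] H), IsSelfAdjoint S → ∀ x : H, (inner ℂ x (S x) : ℂ).im = 0 := by
    intro S hS x
    have h1 : (starRingEnd ℂ) (inner ℂ x (S x) : ℂ) = inner ℂ x (S x) := by
      rw [inner_conj_symm]
      nth_rewrite 1 [← hS.adjoint_eq]
      exact ContinuousLinearMap.adjoint_inner_left S x x
    exact Complex.conj_eq_iff_im.mp h1
  -- positivity: inner b ((Ring.inverse (A t))^2 b) = ‖Ring.inverse (A t) b‖²
  have hpos : ∀ t : ℝ, (0:ℝ) ≤ (inner ℂ b (((Ring.inverse (A t)) ^ 2) b) : ℂ).re := by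
    intro t
    have : (inner ℂ b (((Ring.inverse (A t)) ^ 2) b) : ℂ)
        = inner ℂ (Ring.inverse (A t) b) (Ring.inverse (A t) b) := by
      rw [sq]
      rw [ContinuousLinearMap.mul_apply]
      nth_rewrite 1 [← (hsaInv t).adjoint_eq]
      rw [ContinuousLinearMap.adjoint_inner_right]
    rw [this, ← RCLike.re_to_complex]
    exact inner_self_nonneg
  -- derivative
  have hderiv : ∀ t : ℝ, ‖K‖ < t →
      HasDerivAt (fun s : ℝ => s - 1 - (inner ℂ b ((Ring.inverse (A s)) b) : ℂ).re)
        (1 + (inner ℂ b (((Ring.inverse (A t)) ^ 2) b) : ℂ).re) t := by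
    intro t ht
    set u := (hunit t ht).unit with hu
    have hcoe : (u : H →L[ℂ] H) = A t := (hunit t ht).unit_spec
    have hAder : HasDerivAt A (1 : H →L[ℂ] H) t := by
      have h1 : HasDerivAt (fun s : ℝ => ((s : ℂ)) • (1 : H →L[ℂ] H)) ((1:ℂ) • (1 : H →L[ℂ] H)) t :=
        (Complex.ofRealCLM.hasDerivAt).smul_const (1 : H →L[ℂ] H)
      simpa [hA] using h1.sub_const K
    have hinv : HasDerivAt (fun s => Ring.inverse (A s))
        (-((Ring.inverse (A t)) * (1 : H →L[ℂ] H) * (Ring.inverse (A t)))) t := by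
      have h2 : HasFDerivAt Ring.inverse
          (-(ContinuousLinearMap.mulLeftRight ℝ (H →L[ℂ] H) ↑u⁻¹ ↑u⁻¹)) (A t) := by
        rw [← hcoe]; exact hasFDerivAt_ringInverse u
      have h3 := h2.comp_hasDerivAt t hAder
      have h4 : (↑u⁻¹ : H →L[ℂ] H) = Ring.inverse (A t) := by
        rw [← hcoe, Ring.inverse_unit]
      simp only [h4, ContinuousLinearMap.neg_apply, ContinuousLinearMap.mulLeftRight_apply, mul_one] at h3
      exact h3
    -- g : T ↦ (inner ℂ b (T b)).re as an ℝ-CLM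
    set g : (H →L[ℂ] H) →L[ℝ] ℝ := Complex.reCLM.comp
      (((innerSL ℂ b).comp (ContinuousLinearMap.apply ℂ H b)).restrictScalars ℝ) with hg
    have hgap : ∀ T : H →L[ℂ] H, g T = (inner ℂ b (T b) : ℂ).re := fun T => rfl
    have h5 : HasDerivAt (fun s => g (Ring.inverse (A s)))
        (g (-((Ring.inverse (A t)) * (1 : H →L[ℂ] H) * (Ring.inverse (A t))))) t :=
      g.hasFDerivAt.comp_hasDerivAt t hinv
    have h6 : g (-((Ring.inverse (A t)) * (1 : H →L[ℂ] H) * (Ring.inverse (A t))))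
        = -(inner ℂ b (((Ring.inverse (A t)) ^ 2) b) : ℂ).re := by
      rw [map_neg, hgap, sq, mul_one]
    rw [h6] at h5
    have h7 : HasDerivAt (fun s : ℝ => s - 1) 1 t := (hasDerivAt_id t).sub_const 1
    have h8 := h7.sub h5
    rw [sub_neg_eq_add] at h8
    exact h8
  refine ⟨fun lam hlam => ⟨hreal _ (hsaInv lam) b, hderiv lam hlam, by linarith [hpos lam]⟩, ?_⟩
  -- strict mono
  refine strictMonoOn_of_deriv_pos (convex_Ioi _) ?_ ?_
  · intro t ht
    exact ((hderiv t (by simpa using ht)).continuousAt).continuousWithinAt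
  · intro t ht
    rw [interior_Ioi] at ht
    rw [(hderiv t ht).deriv]
    linarith [hpos t]
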